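/- Let ρ be a real number with −1 < ρ < 1. Then the function t ↦ (ρ + t)/√(1 + 2tρ + t²) is strictly increasing on the interval (0, ∞). -/
import Mathlib


/-- The second correlation curve `r₂(t) = (ρ + t)/√(1 + 2tρ + t²)` is strictly
increasing on `(0, ∞)` when `-1 < ρ < 1`. -/
theorem r2_strictMonoOn (ρ : ℝ) (hρ₁ : -1 < ρ) (hρ₂ : ρ < 1) :
    StrictMonoOn (fun t : ℝ => (ρ + t) / Real.sqrt (1 + 2 * t * ρ + t ^ 2))
      (Set.Ioi (0 : ℝ)) := by
  have hc : 0 < 1 - ρ ^ 2 := by nlinarith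
  intro x hx y hy hxy
  simp only
  have hq : ∀ t : ℝ, 1 + 2 * t * ρ + t ^ 2 = (ρ + t) ^ 2 + (1 - ρ ^ 2) := by
    intro t; ring
  rw [hq x, hq y]
  set a := ρ + x with ha
  set b := ρ + y with hb
  have hab : a < b := by simp [ha, hb]; linarith
  have hA : 0 < Real.sqrt (a ^ 2 + (1 - ρ ^ 2)) :=
    Real.sqrt_pos.mpr (by positivity)
  have hB : 0 < Real.sqrt (b ^ 2 + (1 - ρ ^ 2)) :=
    Real.sqrt_pos.mpr (by positivity)
  have hA2 : Real.sqrt (a ^ 2 + (1 - ρ ^ 2)) ^ 2 = a ^ 2 + (1 - ρ ^ 2) :=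
    Real.sq_sqrt (by positivity)
  have hB2 : Real.sqrt (b ^ 2 + (1 - ρ ^ 2)) ^ 2 = b ^ 2 + (1 - ρ ^ 2) :=
    Real.sq_sqrt (by positivity)
  rw [div_lt_div_iff₀ hA hB]
  set A := Real.sqrt (a ^ 2 + (1 - ρ ^ 2))
  set B := Real.sqrt (b ^ 2 + (1 - ρ ^ 2))
  rcases lt_or_ge a 0 with hneg | hpos
  · rcases le_or_gt 0 b with hbpos | hbneg
    · have h1 : a * B < 0 := mul_neg_of_neg_of_pos hneg hB
      have h2 : 0 ≤ b * A := mul_nonneg hbpos hA.le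
      linarith
    · -- a < b < 0
      have hsq : b ^ 2 < a ^ 2 := by nlinarith
      have e1 : (a * B) ^ 2 = a ^ 2 * (b ^ 2 + (1 - ρ ^ 2)) := by
        rw [mul_pow, hB2]
      have e2 : (b * A) ^ 2 = b ^ 2 * (a ^ 2 + (1 - ρ ^ 2)) := by
        rw [mul_pow, hA2]
      have h1 : (b * A) ^ 2 < (a * B) ^ 2 := by rw [e1, e2]; nlinarith
      nlinarith [mul_neg_of_neg_of_pos hneg hB, mul_neg_of_neg_of_pos hbneg hA]
  · have hbpos : 0 < b := lt_of_le_of_lt hpos hab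
    have hsq : a ^ 2 < b ^ 2 := by nlinarith
    have e1 : (a * B) ^ 2 = a ^ 2 * (b ^ 2 + (1 - ρ ^ 2)) := by
      rw [mul_pow, hB2]
    have e2 : (b * A) ^ 2 = b ^ 2 * (a ^ 2 + (1 - ρ ^ 2)) := by
      rw [mul_pow, hA2]
    have h1 : (a * B) ^ 2 < (b * A) ^ 2 := by rw [e1, e2]; nlinarith
    exact lt_of_pow_lt_pow_left₀ 2 (mul_pos hbpos hA).le h1
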